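/- Let q = 2^r, let σ be the Frobenius automorphism of F_q (σ(a) = a²), let λ ∈ F_q^*, and let n be a positive integer with gcd(n, r) = 1. If C ⊆ F_q^n is a skew (σ,λ)-constacyclic code of length n, then C is equivalent to a cyclic code: there exists β ∈ F_q^* with β^(2^n − 1) = λ such that the image D_β(C) = {D_β(c) : c ∈ C} is a cyclic code, i.e., invariant under the cyclic shift T_1. -/

import Mathlib

open Fin.NatCast

/-- The skew constacyclic shift `T_{σ,λ}` on `F^n`:
`T_{σ,λ}(c)_0 = λ·σ(c_{n−1})` and `T_{σ,λ}(c)_i = σ(c_{i−1})` for `1 ≤ i ≤ n−1`.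
(Here `i - 1` is subtraction in `Fin n`, so `0 - 1 = n - 1`; with `σ = id` and
`λ = 1` this is the ordinary cyclic shift `T_1`.) -/
def skewShift {F : Type*} [Field F] {n : ℕ} [NeZero n] (σ : F → F) (lam : F)
    (c : Fin n → F) : Fin n → F :=
  fun i => if i = 0 then lam * σ (c (i - 1)) else σ (c (i - 1))

/-- The diagonal map `D_β : F^n → F^n` for `q = 2^r` and Frobenius `σ`:
`(D_β(c))_i = β^(2^i − 1)·c_i` (note `2^i − 1 = ∑_{j<i} 2^j`). -/
def diagMapFrob {F : Type*} [Field F] {n : ℕ} (β : F) (c : Fin n → F) :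
    Fin n → F :=
  fun i => β ^ (2 ^ (i : ℕ) - 1) * c i

lemma gcd_two_pow_sub_one : ∀ a : ℕ, ∀ b : ℕ,
    Nat.gcd (2 ^ a - 1) (2 ^ b - 1) = 2 ^ Nat.gcd a b - 1 := by
  intro a
  induction a using Nat.strong_induction_on with
  | _ a ih =>
    intro b
    rcases Nat.eq_zero_or_pos a with rfl | ha
    · simp
    · have hk : b % a < a := Nat.mod_lt _ ha
      obtain ⟨t, ht⟩ : (2 ^ a - 1) ∣ (2 ^ (a * (b / a)) - 1) := by
        have := Nat.sub_dvd_pow_sub_pow (2 ^ a) 1 (b / a)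
        simpa [← pow_mul] using this
      have h1 : (1:ℕ) ≤ 2 ^ a := Nat.one_le_two_pow
      have hY : (1:ℕ) ≤ 2 ^ (b % a) := Nat.one_le_two_pow
      have hbe : 2 ^ b = ((2 ^ a - 1) * t + 1) * 2 ^ (b % a) := by
        rw [← ht, Nat.sub_add_cancel Nat.one_le_two_pow, ← pow_add, Nat.div_add_mod]
      have key : 2 ^ b - 1 = (2 ^ (b % a) - 1) + (2 ^ (b % a) * t) * (2 ^ a - 1) := by
        have e : 2 ^ b = (2 ^ (b % a) * t) * (2 ^ a - 1) + 2 ^ (b % a) := by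
          rw [hbe]; ring
        omega
      rw [key, Nat.gcd_add_mul_right_right, Nat.gcd_comm, ih _ hk, Nat.gcd_rec a b]

lemma pw_aux {F : Type*} [Field F] (β : F) (t : ℕ) :
    β * (β ^ (2 ^ t - 1)) ^ 2 = β ^ (2 ^ (t + 1) - 1) := by
  have h1 : (1:ℕ) ≤ 2 ^ t := Nat.one_le_two_pow
  have h2 : 2 ^ (t + 1) = 2 * 2 ^ t := by rw [pow_succ]; ring
  rw [← pow_mul, ← pow_succ']
  congr 1
  omega

lemma castmod_fin (m M : ℕ) :
    ((M : ℕ) : Fin (m + 1)) = ((M % (m + 1) : ℕ) : Fin (m + 1)) := by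
  conv_lhs => rw [← Nat.div_add_mod M (m + 1)]
  push_cast
  simp [Fin.natCast_self]


/-- Let `q = 2^r`, `σ` the Frobenius automorphism of `F_q`
(`σ(a) = a²`), `λ ∈ F_q^*`, and `n` a positive integer with `gcd(n, r) = 1`.
If `C ⊆ F_q^n` is a skew `(σ,λ)`-constacyclic code, then `C` is equivalent to a
cyclic code: there is `β ∈ F_q^*` with `β^(2^n − 1) = λ` such that `D_β(C)` is a
cyclic code, i.e. invariant under the cyclic shift `T_1`. -/
theorem stmt_13 (r : ℕ) (hr : 1 ≤ r)
    (F : Type*) [Field F] [Fintype F] (hF : Fintype.card F = 2 ^ r)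
    (n : ℕ) [NeZero n] (hnr : Nat.gcd n r = 1)
    (lam : F) (hlam : lam ≠ 0)
    (C : Submodule F (Fin n → F))
    (hC : ∀ c ∈ C, skewShift (fun a : F => a ^ 2) lam c ∈ C) :
    ∃ β : F, β ≠ 0 ∧ β ^ (2 ^ n - 1) = lam ∧
      ∃ C' : Submodule F (Fin n → F),
        (C' : Set (Fin n → F)) = diagMapFrob β '' (C : Set (Fin n → F)) ∧
        ∀ c ∈ C', skewShift (id : F → F) (1 : F) c ∈ C' := by
  -- find β with β^(2^n-1) = lam
  classical
  have hcop : Nat.Coprime (Nat.card Fˣ) (2 ^ n - 1) := by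
    unfold Nat.Coprime
    rw [Nat.card_eq_fintype_card, Fintype.card_units, hF, gcd_two_pow_sub_one,
      Nat.gcd_comm r n, hnr, pow_one]
  set lamu : Fˣ := Units.mk0 lam hlam with hlamu
  set βu : Fˣ := (powCoprime hcop).symm lamu with hβu
  have hβpow : βu ^ (2 ^ n - 1) = lamu := (powCoprime hcop).apply_symm_apply lamu
  set β : F := (βu : F) with hβ
  have hβ0 : β ≠ 0 := βu.ne_zero
  have hβlam : β ^ (2 ^ n - 1) = lam := by
    rw [hβ, ← Units.val_pow_eq_pow_val, hβpow]; rfl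
  -- the diagonal linear map
  let L : (Fin n → F) →ₗ[F] (Fin n → F) :=
    { toFun := diagMapFrob β
      map_add' := by intro x y; funext i; simp [diagMapFrob, mul_add]
      map_smul' := by intro a x; funext i; simp [diagMapFrob]; ring }
  refine ⟨β, hβ0, hβlam, C.map L, by rw [Submodule.map_coe]; rfl, ?_⟩
  obtain ⟨m, rfl⟩ := Nat.exists_eq_succ_of_ne_zero (NeZero.ne n)
  set S : (Fin (m + 1) → F) → (Fin (m + 1) → F) :=
    skewShift (fun a : F => a ^ 2) (1 : F) with hSdef
  have hSval : ∀ (d : Fin (m + 1) → F) i, S d i = (d (i - 1)) ^ 2 := by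
    intro d i
    simp only [hSdef, skewShift]
    split <;> simp
  -- key conjugation identity
  have hconj : ∀ c : Fin (m + 1) → F,
      diagMapFrob β (skewShift (fun a : F => a ^ 2) lam c) = β • S (diagMapFrob β c) := by
    intro c
    funext i
    simp only [Pi.smul_apply, smul_eq_mul, hSval, diagMapFrob, skewShift]
    have hR : ∀ j : Fin (m + 1), β * (β ^ (2 ^ (j : ℕ) - 1) * c j) ^ 2
        = β ^ (2 ^ ((j : ℕ) + 1) - 1) * (c j) ^ 2 := by
      intro j; rw [mul_pow, ← mul_assoc, pw_aux]
    have hj : ((i - 1 : Fin (m + 1)) : ℕ) + 1 = if i = 0 then m + 1 else (i : ℕ) := by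
      rw [Fin.coe_sub_one]
      split
      · ring
      · have : (i : ℕ) ≠ 0 := by
          exact Fin.val_ne_zero_iff.mpr ‹¬ i = 0›
        omega
    by_cases h0 : i = 0
    · subst h0
      rw [if_pos rfl, hR, hj, if_pos rfl]
      simp only [Fin.val_zero, pow_zero, Nat.sub_self, one_mul]
      rw [hβlam]
    · rw [if_neg h0, hR, hj, if_neg h0]
  -- closure of the image under the skew cyclic shift S
  have hSmem : ∀ d ∈ Submodule.map L C, S d ∈ Submodule.map L C := by
    rintro d ⟨c, hc, rfl⟩
    have h1 : L (skewShift (fun a : F => a ^ 2) lam c) = β • S (L c) := hconj c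
    have h2 : S (L c) = β⁻¹ • L (skewShift (fun a : F => a ^ 2) lam c) := by
      rw [h1, smul_smul, inv_mul_cancel₀ hβ0, one_smul]
    rw [h2]
    exact Submodule.smul_mem _ _ (Submodule.mem_map_of_mem (hC c hc))
  -- iterates of S
  have hiterval : ∀ (k : ℕ) (d : Fin (m + 1) → F) (i : Fin (m + 1)),
      S^[k] d i = (d (i - ((k : ℕ) : Fin (m + 1)))) ^ (2 ^ k) := by
    intro k
    induction k with
    | zero => intro d i; simp
    | succ k ihk =>
      intro d i
      rw [Function.iterate_succ_apply', hSval, ihk]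
      have e1 : i - 1 - ((k : ℕ) : Fin (m + 1)) = i - (((k + 1 : ℕ)) : Fin (m + 1)) := by
        push_cast; abel
      have e2 : 2 ^ k * 2 = 2 ^ (k + 1) := (pow_succ 2 k).symm
      rw [← pow_mul, e1, e2]
  have hiterMem : ∀ (k : ℕ) (d : Fin (m + 1) → F),
      d ∈ Submodule.map L C → S^[k] d ∈ Submodule.map L C := by
    intro k
    induction k with
    | zero => intro d hd; simpa using hd
    | succ k ihk =>
      intro d hd
      rw [Function.iterate_succ_apply']
      exact hSmem _ (ihk d hd)
  -- CRT: M ≡ 1 mod n, M ≡ 0 mod r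
  have hcopnr : Nat.Coprime (m + 1) r := hnr
  obtain ⟨M, hM1, hM2⟩ := Nat.chineseRemainder hcopnr 1 0
  have hdvd : r ∣ M := (Nat.modEq_zero_iff_dvd).mp hM2
  have hfrob : ∀ a : F, a ^ (2 : ℕ) ^ r = a := by
    intro a; rw [← hF]; exact FiniteField.pow_card a
  have hfixgen : ∀ (t : ℕ) (a : F), a ^ 2 ^ (r * t) = a := by
    intro t
    induction t with
    | zero => intro a; simp
    | succ t iht =>
      intro a
      have e : 2 ^ (r * (t + 1)) = 2 ^ (r * t) * 2 ^ r := by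
        rw [← pow_add, Nat.mul_succ]
      rw [e, pow_mul, iht, hfrob]
  have hfix : ∀ a : F, a ^ 2 ^ M = a := by
    obtain ⟨t, ht⟩ := hdvd
    intro a; rw [ht]; exact hfixgen t a
  have hMcast : ((M : ℕ) : Fin (m + 1)) = 1 := by
    rw [castmod_fin m M, show M % (m + 1) = 1 % (m + 1) from hM1, ← castmod_fin m 1,
      Nat.cast_one]
  -- conclude
  intro c hcmem
  have h1 : skewShift (id : F → F) (1 : F) c = S^[M] c := by
    funext i
    rw [hiterval, hMcast, hfix]
    simp only [skewShift]
    split <;> simp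
  rw [h1]
  exact hiterMem M c hcmem
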